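/- Let n be an even integer with n = 4 or n ≥ 10. If G is a connected finite simple graph on n vertices with e(G) > C(n−2, 2) + 2, where C(a,2)=a(a−1)/2, then G has a perfect matching. -/

import Mathlib

open SimpleGraph Finset


/-- The complete graph on an even number of vertices has a perfect matching. -/
lemma top_pm (n : ℕ) (hn : Even n) :
    ∃ M : (⊤ : SimpleGraph (Fin n)).Subgraph, M.IsPerfectMatching := by
  have hlt : ∀ v : Fin n, (if v.val % 2 = 0 then v.val + 1 else v.val - 1) < n := by
    intro v
    have := v.isLt
    have h2 : n % 2 = 0 := Nat.even_iff.mp hn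
    split_ifs with h <;> omega
  set f : Fin n → Fin n := fun v => ⟨if v.val % 2 = 0 then v.val + 1 else v.val - 1, hlt v⟩ with hf
  have hinv : ∀ v, f (f v) = v := by
    intro v
    apply Fin.ext
    simp only [hf]
    have := v.isLt
    split_ifs <;> omega
  have hne : ∀ v, f v ≠ v := by
    intro v hv
    have : (f v).val = v.val := congrArg Fin.val hv
    simp only [hf] at this
    split_ifs at this <;> omega
  refine ⟨⟨Set.univ, fun a b => f a = b, ?_, ?_, ⟨fun a b h => ?_⟩⟩, ?_, fun v => trivial⟩
  · intro a b h
    exact (SimpleGraph.top_adj _ _).mpr (fun hab => hne a (hab ▸ h))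
  · intro a b _; trivial
  · change f a = b at h; show f b = a
    rw [← h, hinv]
  · intro v _
    exact ⟨f v, rfl, fun w hw => Eq.symm hw⟩


lemma deg_sum_bound (n : ℕ) (Gm : SimpleGraph (Fin n)) [DecidableRel Gm.Adj]
    (hmf : Gm.IsMatchingFree)
    (hmax : ∀ G' > Gm, ∃ M : G'.Subgraph, M.IsPerfectMatching)
    {x y : Fin n} (hxy : x ≠ y) (hnadj : ¬ Gm.Adj x y) :
    Gm.degree x + Gm.degree y ≤ n - 2 := by
  classical
  set G' : SimpleGraph (Fin n) := Gm ⊔ SimpleGraph.fromEdgeSet {s(x,y)} with hG'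
  have hadj' : G'.Adj x y := by
    rw [hG']
    exact Or.inr ⟨rfl, hxy⟩
  have hlt : Gm < G' := by
    refine lt_iff_le_and_ne.mpr ⟨le_sup_left, fun h => hnadj ?_⟩
    rw [h]; exact hadj'
  obtain ⟨M, hM⟩ := hmax G' hlt
  have hM' := Subgraph.isPerfectMatching_iff.mp hM
  -- the partner function
  set m : Fin n → Fin n := fun v => (hM' v).choose with hm
  have hmadj : ∀ v, M.Adj v (m v) := fun v => (hM' v).choose_spec.1
  have hmuniq : ∀ {v w}, M.Adj v w → w = m v := fun h => (hM' _).choose_spec.2 _ h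
  have hminv : ∀ v, m (m v) = v := fun v => (hmuniq ((hmadj v).symm)).symm
  have hminj : Function.Injective m := by
    intro a b h
    rw [← hminv a, h, hminv]
  have hmne : ∀ v, m v ≠ v := fun v h => M.loopless.irrefl v (by have := hmadj v; rwa [h] at this)
  -- M must contain the edge xy
  have hMxy : M.Adj x y := by
    by_contra hc
    have hle : M.spanningCoe ≤ Gm := by
      intro a b hab
      have := M.adj_sub hab
      rw [hG'] at this
      rcases this with h | h
      · exact h
      · exfalso
        rw [fromEdgeSet_adj, Set.mem_singleton_iff, Sym2.eq, Sym2.rel_iff'] at h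
        rcases h.1 with h1 | h1 <;> rw [Prod.ext_iff] at h1 <;>
          obtain ⟨rfl, rfl⟩ := h1
        · exact hc hab
        · exact hc hab.symm
    exact hmf _ ((Subgraph.IsPerfectMatching.toSubgraph_iff hle).mpr hM)
  have hmx : m x = y := (hmuniq hMxy).symm
  have hmy : m y = x := (hmuniq hMxy.symm).symm
  -- key exchange claim
  have swap : ∀ v, v ≠ x → v ≠ y → Gm.Adj x v → Gm.Adj y (m v) → False := by
    intro v hvx hvy haxv haymv
    have hmvx : m v ≠ x := fun h => hvy (by rw [← hminv v, h, hmx])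
    have hmvy : m v ≠ y := fun h => hvx (by rw [← hminv v, h, hmy])
    have hmvv : m v ≠ v := hmne v
    -- build a perfect matching of Gm
    set N : Gm.Subgraph :=
      { verts := Set.univ
        Adj := fun a b =>
          (M.Adj a b ∧ a ≠ x ∧ a ≠ y ∧ a ≠ v ∧ a ≠ m v ∧ b ≠ x ∧ b ≠ y ∧ b ≠ v ∧ b ≠ m v)
          ∨ (a = x ∧ b = v) ∨ (a = v ∧ b = x) ∨ (a = y ∧ b = m v) ∨ (a = m v ∧ b = y)
        adj_sub := by
          rintro a b (⟨hab, h1, h2, h3, h4, h5, h6, h7, h8⟩ | ⟨rfl, rfl⟩ | ⟨rfl, rfl⟩ |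
            ⟨rfl, rfl⟩ | ⟨rfl, rfl⟩)
          · have := M.adj_sub hab
            rw [hG'] at this
            rcases this with h | h
            · exact h
            · exfalso
              rw [fromEdgeSet_adj, Set.mem_singleton_iff, Sym2.eq, Sym2.rel_iff'] at h
              rcases h.1 with h' | h' <;> rw [Prod.ext_iff] at h'
              · exact h1 h'.1
              · exact h2 h'.1
          · exact haxv
          · exact haxv.symm
          · exact haymv
          · exact haymv.symm
        edge_vert := fun _ => Set.mem_univ _
        symm := by
          refine ⟨?_⟩
          rintro a b (⟨hab, h1, h2, h3, h4, h5, h6, h7, h8⟩ | ⟨rfl, rfl⟩ | ⟨rfl, rfl⟩ |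
            ⟨rfl, rfl⟩ | ⟨rfl, rfl⟩)
          · exact Or.inl ⟨hab.symm, h5, h6, h7, h8, h1, h2, h3, h4⟩
          · exact Or.inr (Or.inr (Or.inl ⟨rfl, rfl⟩))
          · exact Or.inr (Or.inl ⟨rfl, rfl⟩)
          · exact Or.inr (Or.inr (Or.inr (Or.inr ⟨rfl, rfl⟩)))
          · exact Or.inr (Or.inr (Or.inr (Or.inl ⟨rfl, rfl⟩))) } with hN
    apply hmf N
    rw [Subgraph.isPerfectMatching_iff]
    intro a
    by_cases hax : a = x
    · subst hax
      refine ⟨v, Or.inr (Or.inl ⟨rfl, rfl⟩), ?_⟩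
      rintro b (⟨hab, h1, _⟩ | ⟨_, rfl⟩ | ⟨h, _⟩ | ⟨h, _⟩ | ⟨h, _⟩)
      · exact absurd rfl h1
      · rfl
      · exact absurd h.symm hvx
      · exact absurd h hxy
      · exact absurd h.symm hmvx
    by_cases hav : a = v
    · subst hav
      refine ⟨x, Or.inr (Or.inr (Or.inl ⟨rfl, rfl⟩)), ?_⟩
      rintro b (⟨hab, _, _, h3, _⟩ | ⟨h, _⟩ | ⟨_, rfl⟩ | ⟨h, _⟩ | ⟨h, _⟩)
      · exact absurd rfl h3
      · exact absurd h hvx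
      · rfl
      · exact absurd h hvy
      · exact absurd h.symm hmvv
    by_cases hay : a = y
    · subst hay
      refine ⟨m v, Or.inr (Or.inr (Or.inr (Or.inl ⟨rfl, rfl⟩))), ?_⟩
      rintro b (⟨hab, _, h2, _⟩ | ⟨h, _⟩ | ⟨h, _⟩ | ⟨_, rfl⟩ | ⟨h, _⟩)
      · exact absurd rfl h2
      · exact absurd h.symm hxy
      · exact absurd h.symm hvy
      · rfl
      · exact absurd h.symm hmvy
    by_cases hamv : a = m v
    · subst hamv
      refine ⟨y, Or.inr (Or.inr (Or.inr (Or.inr ⟨rfl, rfl⟩))), ?_⟩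
      rintro b (⟨hab, _, _, _, h4, _⟩ | ⟨h, _⟩ | ⟨h, _⟩ | ⟨h, _⟩ | ⟨_, rfl⟩)
      · exact absurd rfl h4
      · exact absurd h hmvx
      · exact absurd h hmvv
      · exact absurd h hmvy
      · rfl
    · -- generic vertex
      have hmax' : m a ≠ x := fun h => hay (by rw [← hminv a, h, hmx])
      have hmay : m a ≠ y := fun h => hax (by rw [← hminv a, h, hmy])
      have hmav : m a ≠ v := fun h => hamv (by rw [← hminv a, h])
      have hmamv : m a ≠ m v := fun h => hav (hminj h)
      refine ⟨m a, Or.inl ⟨hmadj a, hax, hay, hav, hamv, hmax', hmay, hmav, hmamv⟩, ?_⟩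
      rintro b (⟨hab, _⟩ | ⟨h, _⟩ | ⟨h, _⟩ | ⟨h, _⟩ | ⟨h, _⟩)
      · exact hmuniq hab
      · exact absurd h hax
      · exact absurd h hav
      · exact absurd h hay
      · exact absurd h hamv
  -- the counting argument
  have hWA : Gm.neighborFinset x ⊆ Finset.univ \ {x, y} := by
    intro u hu
    rw [mem_neighborFinset] at hu
    simp only [mem_sdiff, mem_univ, true_and, mem_insert, mem_singleton]
    push_neg
    exact ⟨fun h => Gm.loopless.irrefl x (h ▸ hu), fun h => hnadj (h ▸ hu)⟩
  have hWB : (Gm.neighborFinset x).image m ⊆ Finset.univ \ {x, y} := by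
    intro u hu
    rw [Finset.mem_image] at hu
    obtain ⟨a, ha, rfl⟩ := hu
    rw [mem_neighborFinset] at ha
    simp only [mem_sdiff, mem_univ, true_and, mem_insert, mem_singleton]
    push_neg
    constructor
    · intro h
      have : a = y := by rw [← hminv a, h, hmx]
      exact hnadj (this ▸ ha)
    · intro h
      have : a = x := by rw [← hminv a, h, hmy]
      exact Gm.loopless.irrefl x (this ▸ ha)
  have hWB' : Gm.neighborFinset y ⊆ Finset.univ \ {x, y} := by
    intro u hu
    rw [mem_neighborFinset] at hu
    simp only [mem_sdiff, mem_univ, true_and, mem_insert, mem_singleton]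
    push_neg
    exact ⟨fun h => hnadj (h ▸ hu.symm), fun h => Gm.loopless.irrefl y (h ▸ hu)⟩
  have hdisj : Disjoint ((Gm.neighborFinset x).image m) (Gm.neighborFinset y) := by
    rw [Finset.disjoint_left]
    rintro u hu hu'
    rw [Finset.mem_image] at hu
    obtain ⟨a, ha, rfl⟩ := hu
    rw [mem_neighborFinset] at ha hu'
    have hax : a ≠ x := fun h => Gm.loopless.irrefl x (h ▸ ha)
    have hay : a ≠ y := fun h => hnadj (h ▸ ha)
    exact swap a hax hay ha hu'
  have hcard : ((Gm.neighborFinset x).image m).card + (Gm.neighborFinset y).card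
      ≤ (Finset.univ \ ({x, y} : Finset (Fin n))).card := by
    rw [← Finset.card_union_of_disjoint hdisj]
    exact Finset.card_le_card (Finset.union_subset hWB hWB')
  rw [Finset.card_image_of_injective _ hminj] at hcard
  have hWcard : (Finset.univ \ ({x, y} : Finset (Fin n))).card = n - 2 := by
    rw [Finset.card_sdiff_of_subset (Finset.subset_univ _)]
    simp [Finset.card_insert_of_notMem, hxy]
  rw [hWcard] at hcard
  exact hcard


lemma no_such_graph (n : ℕ) (hn : n = 4 ∨ 10 ≤ n) (H : SimpleGraph (Fin n))
    [DecidableRel H.Adj]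
    (F1 : ∑ v, H.degree v + 12 ≤ 4 * n)
    (F2 : ∀ x y, H.Adj x y → n ≤ H.degree x + H.degree y)
    (F3 : ∀ v, H.degree v + 2 ≤ n)
    (F4 : ∃ x y, H.Adj x y) : False := by
  classical
  -- a neighbor of any vertex has degree at least 2
  have hge2 : ∀ {u z}, H.Adj u z → 2 ≤ H.degree z := by
    intro u z h
    have := F2 u z h
    have := F3 u
    omega
  -- sum over neighborhood bound
  have hNsum : ∀ u, H.degree u + H.degree u * (n - H.degree u) ≤ ∑ v, H.degree v := by
    intro u
    have husub : insert u (H.neighborFinset u) ⊆ Finset.univ := Finset.subset_univ _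
    have hunotmem : u ∉ H.neighborFinset u := by
      simp [mem_neighborFinset]
    have h1 : ∑ v ∈ insert u (H.neighborFinset u), H.degree v ≤ ∑ v, H.degree v :=
      Finset.sum_le_sum_of_subset husub
    rw [Finset.sum_insert hunotmem] at h1
    have h2 : (H.neighborFinset u).card * (n - H.degree u) ≤ ∑ v ∈ H.neighborFinset u, H.degree v := by
      rw [← smul_eq_mul]
      exact Finset.card_nsmul_le_sum _ _ _ (fun w hw => by
        rw [mem_neighborFinset] at hw
        have := F2 u w hw
        omega)
    rw [H.card_neighborFinset_eq_degree] at h2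
    omega
  rcases hn with hn4 | hn10
  · -- n = 4
    subst hn4
    obtain ⟨x, y, hadj⟩ := F4
    have hxy : x ≠ y := hadj.ne
    have hdx : H.degree x = 2 := by have := F2 x y hadj; have := F3 x; have := F3 y; omega
    have hzex : ∃ z, z ∈ H.neighborFinset x ∧ z ≠ y := by
      apply Finset.exists_mem_ne
      rw [H.card_neighborFinset_eq_degree, hdx]
      omega
    obtain ⟨z, hz, hzy⟩ := hzex
    rw [mem_neighborFinset] at hz
    have hzx : z ≠ x := fun h => H.loopless.irrefl x (h ▸ hz)
    have hdy : 2 ≤ H.degree y := hge2 hadj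
    have hdz : 2 ≤ H.degree z := hge2 hz
    have hsum : H.degree x + (H.degree y + H.degree z) ≤ ∑ v, H.degree v := by
      have h1 : ∑ v ∈ ({x, y, z} : Finset (Fin 4)), H.degree v ≤ ∑ v, H.degree v :=
        Finset.sum_le_sum_of_subset (Finset.subset_univ _)
      rwa [Finset.sum_insert (by simp [hxy, hzx.symm]),
        Finset.sum_insert (by simp [hzy.symm]), Finset.sum_singleton] at h1
    omega
  · -- n ≥ 10
    -- every edge has an endpoint of degree ≥ n - 3
    have hbig : ∀ x y, H.Adj x y → H.degree y ≤ H.degree x → n - 3 ≤ H.degree x := by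
      intro x y hadj hle
      by_contra hc
      have h1 : H.degree x + H.degree x * (n - H.degree x) ≤ 4 * n - 12 := le_trans (hNsum x) (by omega)
      have h2 : n ≤ 2 * H.degree x := by have := F2 x y hadj; omega
      have h3 : H.degree x + 2 ≤ n := F3 x
      have h4 : H.degree x + 4 ≤ n := by omega
      have h5 : H.degree x ≤ n := by omega
      have h10 : (10 : ℤ) ≤ (n : ℤ) := by exact_mod_cast hn10
      zify [h5, show 12 ≤ 4 * n by omega] at h1
      zify at h2 h3 h4
      nlinarith [mul_nonneg (by linarith : (0:ℤ) ≤ 2 * (H.degree x : ℤ) - n)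
          (by linarith : (0:ℤ) ≤ (n : ℤ) - 4 - H.degree x),
        mul_nonneg (by linarith : (0:ℤ) ≤ (n : ℤ) - 4 - H.degree x)
          (by linarith : (0:ℤ) ≤ (n : ℤ) - 10)]
    have hK : ∀ x y, H.Adj x y → n - 3 ≤ H.degree x ∨ n - 3 ≤ H.degree y := by
      intro x y hadj
      rcases le_total (H.degree y) (H.degree x) with h | h
      · exact Or.inl (hbig x y hadj h)
      · exact Or.inr (hbig y x hadj.symm h)
    set K : Finset (Fin n) := Finset.univ.filter (fun v => n - 3 ≤ H.degree v) with hKdef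
    have hmemK : ∀ z, z ∈ K ↔ n - 3 ≤ H.degree z := by
      intro z; simp [hKdef]
    have hKne : K.Nonempty := by
      obtain ⟨x, y, hadj⟩ := F4
      rcases hK x y hadj with h | h
      · exact ⟨x, (hmemK x).mpr h⟩
      · exact ⟨y, (hmemK y).mpr h⟩
    -- K has at most 2 elements
    have hKcard : K.card ≤ 2 := by
      by_contra hc
      push_neg at hc
      obtain ⟨u, hu⟩ := hKne
      have h2 : 1 < (K.erase u).card := by
        have := Finset.card_erase_of_mem hu
        omega
      rw [Finset.one_lt_card] at h2
      obtain ⟨v, hv, w, hw, hvw⟩ := h2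
      have hvu : v ≠ u := Finset.ne_of_mem_erase hv
      have hwu : w ≠ u := Finset.ne_of_mem_erase hw
      have hdu : n - 3 ≤ H.degree u := (hmemK u).mp hu
      have hdv : n - 3 ≤ H.degree v := (hmemK v).mp (Finset.mem_of_mem_erase hv)
      have hdw : n - 3 ≤ H.degree w := (hmemK w).mp (Finset.mem_of_mem_erase hw)
      set T : Finset (Fin n) := H.neighborFinset u \ {v, w} with hT
      have hTcard : H.degree u - 2 ≤ T.card := by
        have := Finset.le_card_sdiff ({v, w} : Finset (Fin n)) (H.neighborFinset u)
        rw [← hT] at this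
        have hc2 : ({v, w} : Finset (Fin n)).card ≤ 2 := Finset.card_insert_le _ _ |>.trans (by simp)
        rw [H.card_neighborFinset_eq_degree] at this
        omega
      have hTsum : T.card * 2 ≤ ∑ z ∈ T, H.degree z := by
        rw [← smul_eq_mul]
        exact Finset.card_nsmul_le_sum _ _ _ (fun z hz => by
          rw [hT, Finset.mem_sdiff, mem_neighborFinset] at hz
          exact hge2 hz.1)
      have hdisj : Disjoint ({u, v, w} : Finset (Fin n)) T := by
        rw [Finset.disjoint_left]
        intro a ha haT
        rw [hT, Finset.mem_sdiff, mem_neighborFinset] at haT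
        simp only [Finset.mem_insert, Finset.mem_singleton] at ha
        rcases ha with rfl | rfl | rfl
        · exact H.loopless.irrefl a haT.1
        · exact haT.2 (by simp)
        · exact haT.2 (by simp)
      have hsum : ∑ z ∈ ({u, v, w} : Finset (Fin n)) ∪ T, H.degree z ≤ ∑ z, H.degree z :=
        Finset.sum_le_sum_of_subset (Finset.subset_univ _)
      rw [Finset.sum_union hdisj, Finset.sum_insert (by simp [hvu.symm, hwu.symm]),
        Finset.sum_insert (by simp [hvw]), Finset.sum_singleton] at hsum
      have hF3u := F3 u
      omega
    -- now K has 1 or 2 elements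
    interval_cases hKc : K.card
    · exact absurd (Finset.card_eq_zero.mp hKc) (Finset.nonempty_iff_ne_empty.mp hKne)
    · -- K = {u} : impossible
      obtain ⟨u, hKu⟩ := Finset.card_eq_one.mp hKc
      have honly : ∀ {a b}, H.Adj a b → a = u ∨ b = u := by
        intro a b hab
        rcases hK a b hab with h | h
        · exact Or.inl (by have := (hmemK a).mpr h; rw [hKu] at this; simpa using this)
        · exact Or.inr (by have := (hmemK b).mpr h; rw [hKu] at this; simpa using this)
      have hdu : n - 3 ≤ H.degree u := (hmemK u).mp (by rw [hKu]; simp)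
      have : 0 < H.degree u := by omega
      obtain ⟨z, hz⟩ := (H.degree_pos_iff_exists_adj u).mp this
      have hzu : z ≠ u := fun h => H.loopless.irrefl u (h ▸ hz)
      have hdz : 2 ≤ H.degree z := hge2 hz
      have hz'ex : ∃ z', z' ∈ H.neighborFinset z ∧ z' ≠ u := by
        apply Finset.exists_mem_ne
        rw [H.card_neighborFinset_eq_degree]
        omega
      obtain ⟨z', hz', hz'u⟩ := hz'ex
      rw [mem_neighborFinset] at hz'
      rcases honly hz' with h | h
      · exact hzu h
      · exact hz'u h
    · -- K = {v, w}
      obtain ⟨v, w, hvw, hKvw⟩ := Finset.card_eq_two.mp hKc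
      have hmemK2 : ∀ {z}, n - 3 ≤ H.degree z → z = v ∨ z = w := by
        intro z hzK
        have := (hmemK z).mpr hzK
        rw [hKvw] at this
        simpa using this
      have hdv : n - 3 ≤ H.degree v := (hmemK v).mp (by rw [hKvw]; simp)
      have hdw : n - 3 ≤ H.degree w := (hmemK w).mp (by rw [hKvw]; simp)
      have hsmall : ∀ u, u ≠ v → u ≠ w → H.degree u ≤ 2 := by
        intro u huv huw
        have hsub : H.neighborFinset u ⊆ {v, w} := by
          intro z hzmem
          rw [mem_neighborFinset] at hzmem
          simp only [Finset.mem_insert, Finset.mem_singleton]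
          rcases hK u z hzmem with h | h
          · rcases hmemK2 h with h' | h' <;> [exact absurd h' huv; exact absurd h' huw]
          · exact hmemK2 h
        calc H.degree u = (H.neighborFinset u).card := (H.card_neighborFinset_eq_degree u).symm
          _ ≤ ({v, w} : Finset (Fin n)).card := Finset.card_le_card hsub
          _ ≤ 2 := (Finset.card_insert_le _ _).trans (by simp)
      -- both v and w have degree ≥ n - 2
      have hbigdeg : ∀ a b, a = v ∨ a = w → b = v ∨ b = w → a ≠ b → n - 2 ≤ H.degree a := by
        intro a b ha hb hab
        have hda : n - 3 ≤ H.degree a := by rcases ha with rfl | rfl <;> assumption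
        have huex : ∃ u, u ∈ H.neighborFinset a ∧ u ≠ b := by
          apply Finset.exists_mem_ne
          rw [H.card_neighborFinset_eq_degree]
          omega
        obtain ⟨u, hu, hub⟩ := huex
        rw [mem_neighborFinset] at hu
        have hua : u ≠ a := fun h => H.loopless.irrefl a (h ▸ hu)
        have huv' : u ≠ v := by
          rcases ha with rfl | rfl
          · exact hua
          · rcases hb with rfl | rfl
            · exact hub
            · exact absurd rfl hab
        have huw' : u ≠ w := by
          rcases ha with rfl | rfl
          · rcases hb with rfl | rfl
            · exact absurd rfl hab
            · exact hub
          · exact hua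
        have := hsmall u huv' huw'
        have := F2 a u hu
        omega
      have hdv2 : n - 2 ≤ H.degree v := hbigdeg v w (Or.inl rfl) (Or.inr rfl) hvw
      have hdw2 : n - 2 ≤ H.degree w := hbigdeg w v (Or.inr rfl) (Or.inl rfl) hvw.symm
      -- final count
      set T : Finset (Fin n) := (H.neighborFinset v).erase w with hT
      have hTcard : H.degree v - 1 ≤ T.card := by
        have := Finset.pred_card_le_card_erase (s := H.neighborFinset v) (a := w)
        rw [← hT, H.card_neighborFinset_eq_degree] at this
        omega
      have hTsum : T.card * 2 ≤ ∑ z ∈ T, H.degree z := by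
        rw [← smul_eq_mul]
        exact Finset.card_nsmul_le_sum _ _ _ (fun z hz => by
          rw [hT, Finset.mem_erase, mem_neighborFinset] at hz
          exact hge2 hz.2)
      have hdisj : Disjoint ({v, w} : Finset (Fin n)) T := by
        rw [Finset.disjoint_left]
        intro a ha haT
        rw [hT, Finset.mem_erase, mem_neighborFinset] at haT
        simp only [Finset.mem_insert, Finset.mem_singleton] at ha
        rcases ha with rfl | rfl
        · exact H.loopless.irrefl a haT.2
        · exact haT.1 rfl
      have hsum : ∑ z ∈ ({v, w} : Finset (Fin n)) ∪ T, H.degree z ≤ ∑ z, H.degree z :=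
        Finset.sum_le_sum_of_subset (Finset.subset_univ _)
      rw [Finset.sum_union hdisj, Finset.sum_insert (by simp [hvw]),
        Finset.sum_singleton] at hsum
      have hF3v := F3 v
      omega


theorem perfectMatching_of_many_edges_aux (n : ℕ) (heven : Even n) (hn : n = 4 ∨ 10 ≤ n)
    (G : SimpleGraph (Fin n)) [DecidableRel G.Adj] (hconn : G.Connected)
    (he : Nat.choose (n - 2) 2 + 2 < G.edgeFinset.card) :
    ∃ M : G.Subgraph, M.IsPerfectMatching := by
  classical
  by_contra hno
  have hmf : G.IsMatchingFree := fun M hM => hno ⟨M, hM⟩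
  obtain ⟨Gm, hle, hmf', hmax⟩ := SimpleGraph.exists_maximal_isMatchingFree hmf
  letI : DecidableRel Gm.Adj := Classical.decRel _
  have hn4 : 4 ≤ n := by rcases hn with rfl | h <;> omega
  have hconn' : Gm.Connected := hconn.mono hle
  have hdegpos : ∀ v : Fin n, 1 ≤ Gm.degree v := by
    intro v
    obtain ⟨w, hw⟩ := Fintype.exists_ne_of_one_lt_card (by simp only [Fintype.card_fin]; omega) v
    obtain ⟨p⟩ := hconn'.preconnected v w
    cases p with
    | nil => exact absurd rfl hw
    | cons h q => exact (Gm.degree_pos_iff_exists_adj v).mpr ⟨_, h⟩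
  have hdeglt : ∀ v : Fin n, Gm.degree v ≤ n - 1 := by
    intro v
    have := Gm.degree_lt_card_verts v
    rw [Fintype.card_fin] at this
    omega
  have hcompl : ∀ v : Fin n, Gmᶜ.degree v + Gm.degree v = n - 1 := by
    intro v
    rw [Gm.degree_compl, Fintype.card_fin]
    have := hdeglt v
    omega
  have F3 : ∀ v : Fin n, Gmᶜ.degree v + 2 ≤ n := by
    intro v
    have := hcompl v
    have := hdegpos v
    omega
  have F2 : ∀ x y : Fin n, Gmᶜ.Adj x y → n ≤ Gmᶜ.degree x + Gmᶜ.degree y := by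
    intro x y hxy
    rw [compl_adj] at hxy
    have hb := deg_sum_bound n Gm hmf' hmax hxy.1 hxy.2
    have h1 := hcompl x
    have h2 := hcompl y
    omega
  have F4 : ∃ x y : Fin n, Gmᶜ.Adj x y := by
    by_contra hc
    push_neg at hc
    have htop : Gm = ⊤ := by
      rw [eq_top_iff]
      intro a b hab
      by_contra hc'
      exact hc a b ((Gm.compl_adj a b).mpr ⟨((SimpleGraph.top_adj a b).mp hab), hc'⟩)
    obtain ⟨M, hM⟩ := top_pm n heven
    rw [htop] at hmf'
    exact hmf' M hM
  have F1 : ∑ v, Gmᶜ.degree v + 12 ≤ 4 * n := by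
    have hsum : ∑ v, Gmᶜ.degree v + ∑ v, Gm.degree v = n * (n - 1) := by
      rw [← Finset.sum_add_distrib]
      rw [Finset.sum_congr rfl (fun v _ => hcompl v)]
      simp [Finset.card_univ, mul_comm]
    have hGmE : 2 * ((n - 2).choose 2 + 3) ≤ ∑ v, Gm.degree v := by
      rw [Gm.sum_degrees_eq_twice_card_edges]
      have hcle : G.edgeFinset.card ≤ Gm.edgeFinset.card :=
        Finset.card_le_card (SimpleGraph.edgeFinset_mono hle)
      omega
    have hch : 2 * ((n - 2).choose 2) = (n - 2) * (n - 3) := by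
      rw [Nat.choose_two_right]
      have heq : (n - 2) - 1 = n - 3 := by omega
      rw [heq]
      have hev : 2 ∣ (n - 2) * (n - 3) := by
        have := Nat.even_mul_succ_self (n - 3)
        have heq2 : (n - 3) + 1 = n - 2 := by omega
        rw [heq2] at this
        exact Even.two_dvd (by rwa [mul_comm] at this)
      exact Nat.mul_div_cancel' hev
    have hkey : (n - 2) * (n - 3) + 4 * n = n * (n - 1) + 6 := by
      zify [show 1 ≤ n by omega, show 2 ≤ n by omega, show 3 ≤ n by omega]
      ring
    omega
  exact no_such_graph n hn Gmᶜ F1 F2 F3 F4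


/-- **Suil O's theorem.** Let `n` be even with `n = 4` or `n ≥ 10`. If `G` is a
connected `n`-vertex graph with `e(G) > C(n−2, 2) + 2`, then `G` has a perfect
matching. -/
theorem perfectMatching_of_many_edges (n : ℕ) (heven : Even n) (hn : n = 4 ∨ 10 ≤ n)
    (G : SimpleGraph (Fin n)) [DecidableRel G.Adj] (hconn : G.Connected)
    (he : Nat.choose (n - 2) 2 + 2 < G.edgeFinset.card) :
    ∃ M : G.Subgraph, M.IsPerfectMatching := by
  exact perfectMatching_of_many_edges_aux n heven hn G hconn he
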